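/- The full interpolatory tangent projection is idempotent: with the same setup (X(I,:) and V(J,:) invertible), the linear map P(H) = H(:,J) V(J,:)^{-T} V^T − X X(I,:)^{-1} H(I,J) V(J,:)^{-T} V^T + X X(I,:)^{-1} H(I,:) satisfies P(P(H)) = P(H) for all H ∈ ℝ^{n×m}. -/
import Mathlib


open Matrix

/-- The full interpolatory tangent projection is idempotent: P(P(H)) = P(H). -/
theorem full_interpolatory_projection_idempotent
    (n m r : ℕ) (hr : 1 ≤ r) (hn : r ≤ n) (hm : r ≤ m)
    (X : Matrix (Fin n) (Fin r) ℝ) (V : Matrix (Fin m) (Fin r) ℝ)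
    (I : Fin r → Fin n) (J : Fin r → Fin m)
    (hI : Function.Injective I) (hJ : Function.Injective J)
    (hXI : IsUnit (X.submatrix I id)) (hVJ : IsUnit (V.submatrix J id))
    (P : Matrix (Fin n) (Fin m) ℝ → Matrix (Fin n) (Fin m) ℝ)
    (hP : ∀ H, P H = H.submatrix id J * ((V.submatrix J id)⁻¹)ᵀ * Vᵀ
        - X * (X.submatrix I id)⁻¹ * H.submatrix I J * ((V.submatrix J id)⁻¹)ᵀ * Vᵀ
        + X * (X.submatrix I id)⁻¹ * H.submatrix I id) :
    ∀ H, P (P H) = P H := by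
  have hXIdet : IsUnit (X.submatrix I id).det := (Matrix.isUnit_iff_isUnit_det _).mp hXI
  have hVJdet : IsUnit (V.submatrix J id).det := (Matrix.isUnit_iff_isUnit_det _).mp hVJ
  -- key cancellation lemmas
  have lemW : ∀ A : Matrix (Fin n) (Fin r) ℝ,
      (A * ((V.submatrix J id)⁻¹)ᵀ * Vᵀ).submatrix id J = A := by
    intro A
    rw [Matrix.submatrix_mul _ _ id id J Function.bijective_id, Matrix.submatrix_id_id,
      ← Matrix.transpose_submatrix, Matrix.mul_assoc, ← Matrix.transpose_mul,
      Matrix.mul_nonsing_inv _ hVJdet, Matrix.transpose_one, Matrix.mul_one]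
  have lemK : ∀ A : Matrix (Fin r) (Fin m) ℝ,
      (X * (X.submatrix I id)⁻¹ * A).submatrix I id = A := by
    intro A
    rw [Matrix.submatrix_mul _ _ I id id Function.bijective_id, Matrix.submatrix_id_id,
      Matrix.submatrix_mul _ _ I id id Function.bijective_id, Matrix.submatrix_id_id,
      Matrix.mul_nonsing_inv _ hXIdet, Matrix.one_mul]
  intro H
  -- submatrices of P H
  have h1 : (P H).submatrix id J = H.submatrix id J := by
    rw [hP H]
    rw [show ((H.submatrix id J * ((V.submatrix J id)⁻¹)ᵀ * Vᵀ
        - X * (X.submatrix I id)⁻¹ * H.submatrix I J * ((V.submatrix J id)⁻¹)ᵀ * Vᵀ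
        + X * (X.submatrix I id)⁻¹ * H.submatrix I id).submatrix id J : Matrix (Fin n) (Fin r) ℝ)
      = (H.submatrix id J * ((V.submatrix J id)⁻¹)ᵀ * Vᵀ).submatrix id J
        - (X * (X.submatrix I id)⁻¹ * H.submatrix I J * ((V.submatrix J id)⁻¹)ᵀ * Vᵀ).submatrix id J
        + (X * (X.submatrix I id)⁻¹ * H.submatrix I id).submatrix id J from rfl]
    rw [lemW, lemW,
      Matrix.submatrix_mul _ _ id id J Function.bijective_id, Matrix.submatrix_id_id,
      Matrix.submatrix_submatrix]
    simp
  have h2 : (P H).submatrix I id = H.submatrix I id := by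
    rw [hP H]
    rw [show ((H.submatrix id J * ((V.submatrix J id)⁻¹)ᵀ * Vᵀ
        - X * (X.submatrix I id)⁻¹ * H.submatrix I J * ((V.submatrix J id)⁻¹)ᵀ * Vᵀ
        + X * (X.submatrix I id)⁻¹ * H.submatrix I id).submatrix I id : Matrix (Fin r) (Fin m) ℝ)
      = (H.submatrix id J * ((V.submatrix J id)⁻¹)ᵀ * Vᵀ).submatrix I id
        - (X * (X.submatrix I id)⁻¹ * H.submatrix I J * ((V.submatrix J id)⁻¹)ᵀ * Vᵀ).submatrix I id
        + (X * (X.submatrix I id)⁻¹ * H.submatrix I id).submatrix I id from rfl]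
    have e1 : (H.submatrix id J * ((V.submatrix J id)⁻¹)ᵀ * Vᵀ).submatrix I id
        = H.submatrix I J * ((V.submatrix J id)⁻¹)ᵀ * Vᵀ := by
      rw [Matrix.submatrix_mul _ _ I id id Function.bijective_id, Matrix.submatrix_id_id,
        Matrix.submatrix_mul _ _ I id id Function.bijective_id, Matrix.submatrix_id_id,
        Matrix.submatrix_submatrix]
      rfl
    have e2 : (X * (X.submatrix I id)⁻¹ * H.submatrix I J * ((V.submatrix J id)⁻¹)ᵀ * Vᵀ).submatrix I id
        = H.submatrix I J * ((V.submatrix J id)⁻¹)ᵀ * Vᵀ := by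
      rw [show X * (X.submatrix I id)⁻¹ * H.submatrix I J * ((V.submatrix J id)⁻¹)ᵀ * Vᵀ
        = X * (X.submatrix I id)⁻¹ * (H.submatrix I J * ((V.submatrix J id)⁻¹)ᵀ * Vᵀ) by
          simp only [Matrix.mul_assoc]]
      rw [lemK]
    rw [e1, e2, lemK]
    simp
  have h3 : (P H).submatrix I J = H.submatrix I J := by
    have : (P H).submatrix I J = ((P H).submatrix I id).submatrix id J := by
      rw [Matrix.submatrix_submatrix]; rfl
    rw [this, h2, Matrix.submatrix_submatrix]; rfl
  rw [hP (P H), h1, h2, h3, ← hP H]
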